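/- arXiv:1806.03229 — 3 statements merged into one kernel-verified Lean document; each statement's English description precedes it below -/
import Mathlib

section
/- Let H be a complex Hilbert space, T ∈ B(H), and let N be a closed subspace of H such that H is the closed linear span of ⋃ₙ Tⁿ(N). Then dim(ker T*) ≤ dim N. (Equivalently: the order of multicyclicity of T is at least dim ker T*.) -/
open ContinuousLinearMap

noncomputable section Aux

open Submodule Set Function

local notation "⟪" x ", " y "⟫" => @inner ℂ _ _ x y

/-- The set of indices where a Hilbert basis coefficient is nonzero is countable. -/
lemma hilbertBasis_coeff_countable {K : Type v} [NormedAddCommGroup K]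
    [InnerProductSpace ℂ K] {ι : Type v} (b : HilbertBasis ι ℂ K) (x : K) :
    {i : ι | ⟪b i, x⟫ ≠ 0}.Countable := by
  have hmem : Memℓp (b.repr x) 2 := lp.memℓp (b.repr x)
  have hsum : Summable fun i => ‖b.repr x i‖ ^ (2 : ENNReal).toReal :=
    hmem.summable (by norm_num)
  have hc := hsum.countable_support
  refine hc.mono ?_
  intro i hi
  simp only [Function.mem_support, Set.mem_setOf_eq] at hi ⊢
  have hn : b.repr x i ≠ 0 := by rw [b.repr_apply_apply]; exact hi
  have hn' : ‖b.repr x i‖ ≠ 0 := norm_ne_zero_iff.mpr hn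
  positivity

/-- If a family `v` has dense span in a Hilbert space `K` with Hilbert basis `b`,
then the index cardinality of `b` is at most that of `v`. -/
lemma hilbertBasis_card_le_of_dense_span {K : Type v} [NormedAddCommGroup K]
    [InnerProductSpace ℂ K] [CompleteSpace K] {ι κ : Type v} (b : HilbertBasis ι ℂ K)
    (v : κ → K) (hv : (span ℂ (Set.range v)).topologicalClosure = ⊤) :
    Cardinal.mk ι ≤ Cardinal.mk κ := by
  classical
  -- every basis vector has a nonzero coefficient against some `v j`
  have hexists : ∀ i : ι, ∃ j : κ, ⟪b i, v j⟫ ≠ 0 := by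
    intro i
    by_contra h
    push_neg at h
    have hbot : (span ℂ (Set.range v))ᗮ = ⊥ :=
      Submodule.topologicalClosure_eq_top_iff.mp hv
    have hmem : b i ∈ (span ℂ (Set.range v))ᗮ := by
      rw [Submodule.mem_orthogonal']
      intro u hu
      induction hu using Submodule.span_induction with
      | mem u hu => obtain ⟨j, rfl⟩ := hu; exact h j
      | zero => simp
      | add u w _ _ hu hw => rw [inner_add_right, hu, hw, add_zero]
      | smul c u _ hu => rw [inner_smul_right, hu, mul_zero]
    rw [hbot, Submodule.mem_bot] at hmem
    have := b.orthonormal.1 i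
    rw [hmem] at this
    simp at this
  cases finite_or_infinite κ with
  | inl hfin =>
    -- finite case: `K` is spanned by finitely many vectors
    haveI : FiniteDimensional ℂ (span ℂ (Set.range v)) :=
      FiniteDimensional.span_of_finite ℂ (Set.finite_range v)
    have hclosed : IsClosed ((span ℂ (Set.range v) : Submodule ℂ K) : Set K) :=
      (span ℂ (Set.range v)).closed_of_finiteDimensional
    have htop : span ℂ (Set.range v) = ⊤ := by
      rw [← hv, (IsClosed.submodule_topologicalClosure_eq hclosed)]
    have hrank : Module.rank ℂ K ≤ Cardinal.mk κ := by
      have h1 : Module.rank ℂ K = Module.rank ℂ (⊤ : Submodule ℂ K) := (rank_top ℂ K).symm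
      rw [h1, ← htop]
      refine (rank_span_le _).trans ?_
      exact Cardinal.mk_range_le
    calc Cardinal.mk ι ≤ Module.rank ℂ K := by
          simpa using b.orthonormal.linearIndependent.cardinal_lift_le_rank
      _ ≤ Cardinal.mk κ := hrank
  | inr hinf =>
    -- infinite case: count via countable fibers
    choose j hj using hexists
    have hfib : ∀ j₀ : κ, {i : ι | j i = j₀}.Countable := by
      intro j₀
      refine (hilbertBasis_coeff_countable b (v j₀)).mono ?_
      intro i hi
      simp only [Set.mem_setOf_eq] at hi ⊢
      rw [← hi]
      exact hj i
    have : Cardinal.mk ι ≤ Cardinal.mk κ * Cardinal.aleph0 := by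
      have he : Cardinal.mk ι = Cardinal.mk (Σ j₀ : κ, {i : ι // j i = j₀}) :=
        Cardinal.mk_congr (Equiv.sigmaFiberEquiv j).symm
      rw [he, Cardinal.mk_sigma]
      calc (Cardinal.sum fun j₀ : κ => Cardinal.mk {i : ι // j i = j₀})
          ≤ Cardinal.sum fun _ : κ => Cardinal.aleph0 := by
            refine Cardinal.sum_le_sum _ _ fun j₀ => ?_
            exact (hfib j₀).le_aleph0
        _ = Cardinal.mk κ * Cardinal.aleph0 := by simp [Cardinal.sum_const]
    refine this.trans ?_
    rw [Cardinal.mul_aleph0_eq (Cardinal.aleph0_le_mk κ)]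

end Aux

/-- If `N` is a closed subspace of a Hilbert space `H` such that `H` is the closed
linear span of `⋃ₙ Tⁿ(N)`, then `dim (ker T*) ≤ dim N`, expressed by the existence
of a linear isometry from `ker T*` into `N`. -/
theorem dim_ker_adjoint_le_of_span (H : Type*) [NormedAddCommGroup H]
    [InnerProductSpace ℂ H] [CompleteSpace H] (T : H →L[ℂ] H)
    (N : Submodule ℂ H) (hN : IsClosed (N : Set H))
    (hspan : (⨆ n : ℕ, N.map ((T ^ n : H →L[ℂ] H) : H →ₗ[ℂ] H)).topologicalClosure = ⊤) :
    Nonempty ((LinearMap.ker (adjoint T : H →ₗ[ℂ] H)) →ₗᵢ[ℂ] N) := by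
  classical
  set K : Submodule ℂ H := LinearMap.ker (adjoint T : H →ₗ[ℂ] H) with hK
  haveI : CompleteSpace N := hN.completeSpace_coe
  have hKclosed : IsClosed (K : Set H) := ContinuousLinearMap.isClosed_ker (adjoint T)
  haveI : CompleteSpace K := hKclosed.completeSpace_coe
  -- Hilbert bases
  obtain ⟨s, b, hb⟩ := exists_hilbertBasis ℂ K
  obtain ⟨w, c, hc⟩ := exists_hilbertBasis ℂ N
  -- the projected family
  set v : w → K := fun j => K.orthogonalProjectionOnto ((c j : N) : H) with hv
  -- dense span of v in K
  have hdense : (Submodule.span ℂ (Set.range v)).topologicalClosure = ⊤ := by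
    rw [Submodule.topologicalClosure_eq_top_iff]
    rw [Submodule.eq_bot_iff]
    intro y hy
    -- y ⊥ each v j
    have hyv : ∀ j : w, inner (𝕜 := ℂ) (v j) y = 0 := fun j =>
      hy (v j) (Submodule.subset_span ⟨j, rfl⟩)
    -- hence (y : H) ⊥ each c j
    have hyc : ∀ j : w, inner (𝕜 := ℂ) ((c j : N) : H) (y : H) = 0 := by
      intro j
      have := hyv j
      simp only [hv] at this
      rwa [Submodule.inner_orthogonalProjectionOnto_eq_of_mem_right] at this
    -- hence (y : H) ⊥ N
    have hyN : ∀ x : N, inner (𝕜 := ℂ) (x : H) (y : H) = 0 := by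
      intro x
      -- consider the continuous linear functional n ↦ ⟪y, n⟫ on N
      set φ : N →L[ℂ] ℂ := (innerSL ℂ (y : H)).comp N.subtypeL with hφ
      have hφc : ∀ j : w, φ (c j) = 0 := by
        intro j
        have := hyc j
        simp only [hφ, ContinuousLinearMap.comp_apply, innerSL_apply_apply, Submodule.subtypeL_apply]
        rw [← inner_conj_symm]
        rw [this]
        simp
      have hker : Submodule.span ℂ (Set.range c) ≤ LinearMap.ker (φ : N →ₗ[ℂ] ℂ) := by
        rw [Submodule.span_le]
        rintro _ ⟨j, rfl⟩
        exact hφc j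
      have hker2 : (Submodule.span ℂ (Set.range c)).topologicalClosure ≤ LinearMap.ker (φ : N →ₗ[ℂ] ℂ) :=
        Submodule.topologicalClosure_minimal _ hker (ContinuousLinearMap.isClosed_ker φ)
      rw [c.dense_span] at hker2
      have hx : φ x = 0 := hker2 (Submodule.mem_top)
      simp only [hφ, ContinuousLinearMap.comp_apply, innerSL_apply_apply, Submodule.subtypeL_apply] at hx
      rw [← inner_conj_symm, hx]
      simp
    -- hence (y : H) ⊥ T^n N for all n
    have hyTN : ∀ n : ℕ, N.map ((T ^ n : H →L[ℂ] H) : H →ₗ[ℂ] H) ≤ (ℂ ∙ (y : H))ᗮ := by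
      intro n
      rintro _ ⟨x, hx, rfl⟩
      rw [Submodule.mem_orthogonal_singleton_iff_inner_right]
      cases n with
      | zero =>
        have h : inner (𝕜 := ℂ) x (y : H) = 0 := hyN ⟨x, hx⟩
        simp only [pow_zero, ContinuousLinearMap.coe_coe, ContinuousLinearMap.one_apply]
        rw [← inner_conj_symm, h, map_zero]
      | succ m =>
        have hy0 : adjoint T (y : H) = 0 := LinearMap.mem_ker.mp y.2
        simp only [ContinuousLinearMap.coe_coe]
        have h1 : (T ^ (m + 1)) x = T ((T ^ m) x) := by rw [pow_succ']; rfl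
        rw [h1, ← ContinuousLinearMap.adjoint_inner_left, hy0, inner_zero_left]
    -- conclude y = 0
    have hbot : (⨆ n : ℕ, N.map ((T ^ n : H →L[ℂ] H) : H →ₗ[ℂ] H))ᗮ = ⊥ :=
      Submodule.topologicalClosure_eq_top_iff.mp hspan
    have hy0 : (y : H) = 0 := by
      have hmem : (y : H) ∈ (⨆ n : ℕ, N.map ((T ^ n : H →L[ℂ] H) : H →ₗ[ℂ] H))ᗮ := by
        rw [Submodule.mem_orthogonal]
        intro u hu
        exact Submodule.mem_orthogonal_singleton_iff_inner_left.mp (iSup_le hyTN hu)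
      rw [hbot] at hmem
      exact hmem
    exact Submodule.coe_eq_zero.mp hy0
  -- cardinality comparison and embedding
  have hcard : Cardinal.mk s ≤ Cardinal.mk w := hilbertBasis_card_le_of_dense_span b v hdense
  obtain ⟨g⟩ := (Cardinal.le_def _ _).mp hcard
  -- orthonormal family in N indexed by s
  have hon : Orthonormal ℂ (fun i : s => c (g i)) := c.orthonormal.comp g g.injective
  -- build the isometry
  exact ⟨(hon.orthogonalFamily.linearIsometry).comp b.repr.toLinearIsometry⟩
end

section
/- Let T ∈ B(H) be a 2-isometry on a complex Hilbert space H, i.e., I − 2T*T + T*²T² = 0. Then ‖Th‖ ≥ ‖h‖ for all h ∈ H; in particular T is injective and left-invertible. -/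
open ContinuousLinearMap

/-- A `2`-isometry `T` (i.e. `I − 2T*T + T*²T² = 0`) is expansive:
`‖Th‖ ≥ ‖h‖` for all `h`; in particular `T` is injective and left-invertible. -/
theorem two_isometry_expansive {H : Type*} [NormedAddCommGroup H]
    [InnerProductSpace ℂ H] [CompleteSpace H] (T : H →L[ℂ] H)
    (h2iso : (1 : H →L[ℂ] H) - 2 • (adjoint T * T) + adjoint (T ^ 2) * T ^ 2 = 0) :
    (∀ h : H, ‖h‖ ≤ ‖T h‖) ∧ Function.Injective T ∧
      ∃ S : H →L[ℂ] H, S.comp T = ContinuousLinearMap.id ℂ H := by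
  -- the fundamental identity: ‖x‖² + ‖T²x‖² = 2‖Tx‖²
  have key : ∀ x : H, ‖x‖ ^ 2 + ‖T (T x)‖ ^ 2 = 2 * ‖T x‖ ^ 2 := by
    intro x
    have hx := DFunLike.congr_fun h2iso x
    simp only [add_apply, sub_apply, smul_apply, one_apply_eq_self, mul_apply_eq_comp, zero_apply] at hx
    have h1 : (inner ℂ (x - 2 • (adjoint T) (T x) + (adjoint (T ^ 2)) ((T ^ 2) x)) x : ℂ)
        = 0 := by rw [hx]; simp
    rw [inner_add_left, inner_sub_left, two_smul, inner_add_left] at h1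
    rw [adjoint_inner_left, adjoint_inner_left] at h1
    have ep : (T ^ 2) x = T (T x) := by rw [pow_two, mul_apply_eq_comp]
    rw [inner_self_eq_norm_sq_to_K, inner_self_eq_norm_sq_to_K, ep,
      inner_self_eq_norm_sq_to_K] at h1
    have h2 : ‖x‖ ^ 2 - (‖T x‖ ^ 2 + ‖T x‖ ^ 2) + ‖T (T x)‖ ^ 2 = 0 := by
      have := congrArg Complex.re h1
      simpa [← Complex.ofReal_pow] using this
    linarith
  -- expansiveness via the arithmetic progression ‖Tⁿh‖²
  have hexp : ∀ h : H, ‖h‖ ≤ ‖T h‖ := by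
    intro h
    set f : ℕ → ℝ := fun n => ‖(T ^ n) h‖ ^ 2 with hf
    have hrec : ∀ n, f n + f (n + 2) = 2 * f (n + 1) := by
      intro n
      have e1 : (T ^ (n + 1)) h = T ((T ^ n) h) := by
        rw [pow_succ', mul_apply_eq_comp]
      have e2 : (T ^ (n + 2)) h = T (T ((T ^ n) h)) := by
        rw [show n + 2 = (n + 1) + 1 from rfl, pow_succ', mul_apply_eq_comp, e1]
      simp only [hf, e1, e2]
      exact key ((T ^ n) h)
    have harith : ∀ n, f n = f 0 + n * (f 1 - f 0) := by
      have H2 : ∀ n, f n = f 0 + n * (f 1 - f 0) ∧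
          f (n + 1) = f 0 + (n + 1) * (f 1 - f 0) := by
        intro n
        induction n with
        | zero => constructor <;> push_cast <;> ring
        | succ k ih =>
          obtain ⟨ihk, ihk1⟩ := ih
          have hr := hrec k
          constructor
          · push_cast at ihk1 ⊢; linarith
          · push_cast at ihk ihk1 ⊢; nlinarith
      exact fun n => (H2 n).1
    have hge : f 0 ≤ f 1 := by
      by_contra hlt
      push_neg at hlt
      obtain ⟨n, hn⟩ := exists_nat_gt (f 0 / (f 0 - f 1))
      have hd : 0 < f 0 - f 1 := by linarith
      have h1 : f 0 / (f 0 - f 1) < (n : ℝ) := hn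
      have h2 : f 0 < n * (f 0 - f 1) := by
        rwa [div_lt_iff₀ hd] at h1
      have h3 : f n < 0 := by
        rw [harith n]; nlinarith
      exact absurd h3 (not_lt.mpr (sq_nonneg _))
    have hf0 : f 0 = ‖h‖ ^ 2 := by simp [hf]
    have hf1 : f 1 = ‖T h‖ ^ 2 := by simp [hf]
    rw [hf0, hf1] at hge
    nlinarith [norm_nonneg h, norm_nonneg (T h)]
  -- injectivity
  have hinj : Function.Injective T := by
    intro x y hxy
    have : ‖x - y‖ ≤ ‖T (x - y)‖ := hexp _
    rw [map_sub, hxy, sub_self, norm_zero] at this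
    have := le_antisymm this (norm_nonneg _)
    rwa [norm_eq_zero, sub_eq_zero] at this
  refine ⟨hexp, hinj, ?_⟩
  -- left inverse via invertibility of A = T*T
  set A : H →L[ℂ] H := adjoint T * T with hA
  have hAx : ∀ x, (inner ℂ (A x) x : ℂ) = (‖T x‖ : ℂ) ^ 2 := by
    intro x
    rw [hA, mul_apply_eq_comp, adjoint_inner_left, inner_self_eq_norm_sq_to_K]
    norm_cast
  have hlow : ∀ x : H, ‖x‖ ≤ ‖A x‖ := by
    intro x
    rcases eq_or_ne x 0 with rfl | hx0
    · simp
    · have h1 : ‖x‖ ^ 2 ≤ ‖T x‖ ^ 2 := by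
        have := hexp x
        nlinarith [norm_nonneg x]
      have h2 : (‖T x‖ : ℝ) ^ 2 = ‖(inner ℂ (A x) x : ℂ)‖ := by
        rw [hAx x]
        rw [norm_pow, Complex.norm_real, norm_norm]
      have h3 : ‖(inner ℂ (A x) x : ℂ)‖ ≤ ‖A x‖ * ‖x‖ := by
        have := norm_inner_le_norm (𝕜 := ℂ) (A x) x
        simpa [← Complex.ofReal_pow] using this
      have hxpos : 0 < ‖x‖ := norm_pos_iff.mpr hx0
      have : ‖x‖ ^ 2 ≤ ‖A x‖ * ‖x‖ := by linarith [h1, h2 ▸ h3]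
      nlinarith
  have hanti : AntilipschitzWith 1 A := by
    refine AddMonoidHomClass.antilipschitz_of_bound A fun x => ?_
    simpa using hlow x
  have hdense : (LinearMap.range (A : H →ₗ[ℂ] H)).topologicalClosure = ⊤ := by
    rw [Submodule.topologicalClosure_eq_top_iff]
    rw [Submodule.eq_bot_iff]
    intro x hx
    have h0 : (inner ℂ (A x) x : ℂ) = 0 := by
      have := hx (A x) (LinearMap.mem_range_self _ x)
      -- membership in orthogonal: ∀ y ∈ K, ⟪y, x⟫ = 0
      exact this
    rw [hAx x] at h0
    have : ‖T x‖ = 0 := by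
      have := congrArg (‖·‖) h0
      simpa [← Complex.ofReal_pow] using this
    have hx1 : ‖x‖ ≤ 0 := this ▸ hexp x
    have := le_antisymm hx1 (norm_nonneg x)
    rwa [norm_eq_zero] at this
  have hbij : Function.Bijective A := by
    rw [ContinuousLinearMap.bijective_iff_dense_range_and_antilipschitz]
    exact ⟨hdense, 1, hanti⟩
  let E := ContinuousLinearEquiv.ofBijective A
    ((LinearMap.ker_eq_bot (f := (A : H →ₗ[ℂ] H))).mpr hbij.1)
    ((LinearMap.range_eq_top (f := (A : H →ₗ[ℂ] H))).mpr hbij.2)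
  refine ⟨(E.symm : H →L[ℂ] H).comp (adjoint T), ?_⟩
  ext x
  simp only [coe_comp', Function.comp_apply, ContinuousLinearMap.coe_id', id_eq,
    ContinuousLinearEquiv.coe_coe]
  have : adjoint T (T x) = A x := by rw [hA, mul_apply_eq_comp]
  rw [this]
  have hEx : E x = A x := rfl
  rw [← hEx, ContinuousLinearEquiv.symm_apply_apply]
end

section
/- Let M⁽¹⁾, M⁽²⁾ be nonzero complex Hilbert spaces, and for k = 1, 2 let W⁽ᵏ⁾ be the operator valued unilateral weighted shift on ℓ²(ℕ, M⁽ᵏ⁾) with uniformly bounded weights {Wₙ⁽ᵏ⁾}ₙ≥0, where each Wₙ⁽¹⁾ has dense range. Suppose A : ℓ²(ℕ, M⁽¹⁾) → ℓ²(ℕ, M⁽²⁾) is a bounded operator with matrix representation [A_{i,j}] (A_{i,j} ∈ B(M⁽¹⁾, M⁽²⁾)) satisfying A W⁽¹⁾ = W⁽²⁾ A. Then A is lower triangular, i.e., A_{i,j} = 0 whenever i < j, and A_{i,j} W_{j−1}⁽¹⁾ ⋯ W₀⁽¹⁾ = W_{i−1}⁽²⁾ ⋯ W_{i−j}⁽²⁾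 A_{i−j,0} for all i ≥ j ≥ 1. -/
open ContinuousLinearMap

/-- The product `W_{n-1} ⋯ W_0` of the first `n` weights. -/
def prodWeights {M : Type*} [NormedAddCommGroup M] [InnerProductSpace ℂ M]
    (W : ℕ → (M →L[ℂ] M)) : ℕ → (M →L[ℂ] M)
  | 0 => ContinuousLinearMap.id ℂ M
  | n + 1 => (W n).comp (prodWeights W n)

/-- The product `W_{s+k-1} ⋯ W_s` of `k` consecutive weights starting at index `s`. -/
def segWeights {M : Type*} [NormedAddCommGroup M] [InnerProductSpace ℂ M]
    (W : ℕ → (M →L[ℂ] M)) (s : ℕ) : ℕ → (M →L[ℂ] M)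
  | 0 => ContinuousLinearMap.id ℂ M
  | k + 1 => (W (s + k)).comp (segWeights W s k)

/-- The `(i,j)` matrix entry of an operator `A : ℓ²(ℕ, M1) → ℓ²(ℕ, M2)`. -/
noncomputable def matrixEntry {M1 M2 : Type*}
    [NormedAddCommGroup M1] [InnerProductSpace ℂ M1]
    [NormedAddCommGroup M2] [InnerProductSpace ℂ M2]
    (A : lp (fun _ : ℕ => M1) 2 →L[ℂ] lp (fun _ : ℕ => M2) 2) (i j : ℕ) : M1 → M2 :=
  fun f => A (lp.single 2 j f) i

section Aux

variable {M1 M2 : Type*}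
    [NormedAddCommGroup M1] [InnerProductSpace ℂ M1]
    [NormedAddCommGroup M2] [InnerProductSpace ℂ M2]

lemma aux_single_sub (j : ℕ) (a b : M1) :
    lp.single (E := fun _ : ℕ => M1) 2 j (a - b) = lp.single 2 j a - lp.single 2 j b := by
  apply lp.ext
  funext n
  by_cases h : n = j
  · subst h
    simp [lp.single_apply_self]
  · simp [lp.single_apply_ne _ _ _ h]

lemma aux_single_isometry (j : ℕ) :
    Isometry (fun a : M1 => lp.single (E := fun _ : ℕ => M1) 2 j a) := by
  intro a b
  simp only [edist_dist, dist_eq_norm]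
  rw [← aux_single_sub]
  congr 1
  exact lp.norm_single (E := fun _ : ℕ => M1) (by norm_num) j (a - b)

lemma aux_eval_continuous (i : ℕ) :
    Continuous (fun h : lp (fun _ : ℕ => M2) 2 => h i) := by
  apply Metric.continuous_iff.mpr
  intro h ε hε
  refine ⟨ε, hε, fun g hg => ?_⟩
  calc dist (g i) (h i) = ‖(g - h : lp (fun _ : ℕ => M2) 2) i‖ := by
        rw [dist_eq_norm]; simp
    _ ≤ ‖g - h‖ := lp.norm_apply_le_norm (by norm_num) (g - h) i
    _ = dist g h := (dist_eq_norm g h).symm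
    _ < ε := hg

lemma matrixEntry_continuous
    (A : lp (fun _ : ℕ => M1) 2 →L[ℂ] lp (fun _ : ℕ => M2) 2) (i j : ℕ) :
    Continuous (matrixEntry A i j) := by
  exact (aux_eval_continuous i).comp (A.continuous.comp (aux_single_isometry j).continuous)

end Aux

/-- If `A` intertwines two operator valued unilateral weighted shifts `W⁽¹⁾`, `W⁽²⁾`
whose first family of weights has dense range, then `A` is lower triangular and
`A_{i,j} W_{j−1}⁽¹⁾ ⋯ W₀⁽¹⁾ = W_{i−1}⁽²⁾ ⋯ W_{i−j}⁽²⁾ A_{i−j,0}` for `i ≥ j ≥ 1`. -/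
theorem intertwiner_lower_triangular {M1 M2 : Type*}
    [NormedAddCommGroup M1] [InnerProductSpace ℂ M1] [CompleteSpace M1] [Nontrivial M1]
    [NormedAddCommGroup M2] [InnerProductSpace ℂ M2] [CompleteSpace M2] [Nontrivial M2]
    (W1 : ℕ → (M1 →L[ℂ] M1)) (W2 : ℕ → (M2 →L[ℂ] M2))
    (C : ℝ) (hC1 : ∀ n, ‖W1 n‖ ≤ C) (hC2 : ∀ n, ‖W2 n‖ ≤ C)
    (hdense : ∀ n, DenseRange (W1 n))
    (Wop1 : lp (fun _ : ℕ => M1) 2 →L[ℂ] lp (fun _ : ℕ => M1) 2)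
    (hWop1 : ∀ h : lp (fun _ : ℕ => M1) 2,
      Wop1 h 0 = 0 ∧ ∀ n : ℕ, Wop1 h (n + 1) = W1 n (h n))
    (Wop2 : lp (fun _ : ℕ => M2) 2 →L[ℂ] lp (fun _ : ℕ => M2) 2)
    (hWop2 : ∀ h : lp (fun _ : ℕ => M2) 2,
      Wop2 h 0 = 0 ∧ ∀ n : ℕ, Wop2 h (n + 1) = W2 n (h n))
    (A : lp (fun _ : ℕ => M1) 2 →L[ℂ] lp (fun _ : ℕ => M2) 2)
    (hA : A.comp Wop1 = Wop2.comp A) :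
    (∀ i j : ℕ, i < j → ∀ f : M1, matrixEntry A i j f = 0) ∧
      (∀ i j : ℕ, 1 ≤ j → j ≤ i → ∀ f : M1,
        matrixEntry A i j (prodWeights W1 j f) =
          segWeights W2 (i - j) j (matrixEntry A (i - j) 0 f)) := by
  -- Wop1 of a single
  have hshift : ∀ (j : ℕ) (f : M1),
      Wop1 (lp.single 2 j f) = lp.single 2 (j + 1) (W1 j f) := by
    intro j f
    apply lp.ext
    funext n
    match n with
    | 0 =>
      have h1 : lp.single (E := fun _ : ℕ => M1) 2 (j+1) (W1 j f) 0 = 0 :=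
        lp.single_apply_ne _ _ _ (by omega)
      rw [(hWop1 (lp.single 2 j f)).1, h1]
    | n + 1 =>
      rw [(hWop1 (lp.single 2 j f)).2 n]
      by_cases h : n = j
      · subst h
        have h1 : lp.single (E := fun _ : ℕ => M1) 2 n f n = f :=
          lp.single_apply_self _ _ _
        have h2 : lp.single (E := fun _ : ℕ => M1) 2 (n+1) (W1 n f) (n+1) = W1 n f :=
          lp.single_apply_self _ _ _
        rw [h1, h2]
      · have h1 : lp.single (E := fun _ : ℕ => M1) 2 j f n = 0 :=
          lp.single_apply_ne _ _ _ h
        have h2 : lp.single (E := fun _ : ℕ => M1) 2 (j+1) (W1 j f) (n+1) = 0 :=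
          lp.single_apply_ne _ _ _ (by omega)
        rw [h1, h2, map_zero]
  have hcomm : ∀ h : lp (fun _ : ℕ => M1) 2, A (Wop1 h) = Wop2 (A h) := by
    intro h
    have := congrArg (fun T => T h) hA
    simpa using this
  -- key recursions
  have key0 : ∀ (j : ℕ) (f : M1), matrixEntry A 0 (j + 1) (W1 j f) = 0 := by
    intro j f
    unfold matrixEntry
    rw [← hshift, hcomm]
    exact (hWop2 (A (lp.single 2 j f))).1
  have keyS : ∀ (m j : ℕ) (f : M1),
      matrixEntry A (m + 1) (j + 1) (W1 j f) = W2 m (matrixEntry A m j f) := by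
    intro m j f
    unfold matrixEntry
    rw [← hshift, hcomm]
    exact (hWop2 (A (lp.single 2 j f))).2 m
  -- lower triangular
  have tri : ∀ j i : ℕ, i < j → ∀ f : M1, matrixEntry A i j f = 0 := by
    intro j
    induction j with
    | zero => intro i hi; omega
    | succ j ih =>
      intro i hi f
      -- it suffices to prove it on the dense range of W1 j
      have hgoal : matrixEntry A i (j + 1) = fun _ => (0 : M2) := by
        refine (hdense j).equalizer (matrixEntry_continuous A i (j+1))
          continuous_const (funext fun g => ?_)
        show matrixEntry A i (j + 1) (W1 j g) = 0
        match i with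
        | 0 => exact key0 j g
        | i + 1 =>
          rw [keyS i j g, ih i (by omega) g, map_zero]
      exact congrFun hgoal f
  refine ⟨fun i j h => tri j i h, ?_⟩
  -- the intertwining identity, by induction on j (no density needed)
  have main : ∀ j : ℕ, 1 ≤ j → ∀ i : ℕ, j ≤ i → ∀ f : M1,
      matrixEntry A i j (prodWeights W1 j f) =
        segWeights W2 (i - j) j (matrixEntry A (i - j) 0 f) := by
    intro j
    induction j with
    | zero => intro h; omega
    | succ j ih =>
      intro _ i hi f
      obtain ⟨m, rfl⟩ : ∃ m, i = m + 1 := ⟨i - 1, by omega⟩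
      have hm : j ≤ m := by omega
      have step : matrixEntry A (m + 1) (j + 1) (prodWeights W1 (j + 1) f) =
          W2 m (matrixEntry A m j (prodWeights W1 j f)) := by
        show matrixEntry A (m + 1) (j + 1) (W1 j (prodWeights W1 j f)) = _
        exact keyS m j (prodWeights W1 j f)
      rw [step]
      by_cases hj : 1 ≤ j
      · rw [ih hj m hm f]
        have h1 : m + 1 - (j + 1) = m - j := by omega
        have h2 : m - j + j = m := by omega
        rw [h1]
        show W2 m (segWeights W2 (m - j) j (matrixEntry A (m - j) 0 f)) =
          (W2 (m - j + j)).comp (segWeights W2 (m - j) j) (matrixEntry A (m - j) 0 f)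
        rw [h2]
        rfl
      · -- j = 0
        have hj0 : j = 0 := by omega
        subst hj0
        show W2 m (matrixEntry A m 0 (ContinuousLinearMap.id ℂ M1 f)) =
          segWeights W2 (m + 1 - 1) 1 (matrixEntry A (m + 1 - 1) 0 f)
        simp only [Nat.add_sub_cancel]
        show W2 m (matrixEntry A m 0 f) =
          (W2 (m + 0)).comp (ContinuousLinearMap.id ℂ M2) (matrixEntry A m 0 f)
        simp
  exact fun i j h1 h2 f => main j h1 i h2 f
end
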